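/- arXiv:0810.4802 — 3 statements merged into one kernel-verified Lean document; each statement's English description precedes it below -/
import Mathlib

section
/- Let X ~ χ²_L and λ > 1. Then E[X · 1{X ≥ λL}] ≤ λL · exp(-(L/2)(λ - log λ - 1)). -/
open Real MeasureTheory ProbabilityTheory Finset
open scoped NNReal ENNReal

lemma gauss_integral (f : ℝ → ℝ) :
    ∫ x, f x ∂(gaussianReal 0 1) = ∫ x, gaussianPDFReal 0 1 x * f x := by
  rw [gaussianReal_of_var_ne_zero 0 one_ne_zero,
    show gaussianPDF 0 1 = fun x => ((Real.toNNReal (gaussianPDFReal 0 1 x) : ℝ≥0) : ℝ≥0∞) from rfl,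
    integral_withDensity_eq_integral_smul ((measurable_gaussianPDFReal 0 1).real_toNNReal) f]
  congr 1
  ext x
  rw [NNReal.smul_def, Real.coe_toNNReal _ (gaussianPDFReal_nonneg 0 1 x), smul_eq_mul]

lemma gauss_integrable {f : ℝ → ℝ} (hfm : Measurable f)
    (hf : Integrable (fun x => gaussianPDFReal 0 1 x * f x)) :
    Integrable f (gaussianReal 0 1) := by
  rw [gaussianReal_of_var_ne_zero 0 one_ne_zero,
    show gaussianPDF 0 1 = fun x => ((Real.toNNReal (gaussianPDFReal 0 1 x) : ℝ≥0) : ℝ≥0∞) from rfl,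
    integrable_withDensity_iff_integrable_smul ((measurable_gaussianPDFReal 0 1).real_toNNReal)]
  have hfx : (fun x => (Real.toNNReal (gaussianPDFReal 0 1 x)) • f x)
      = fun x => gaussianPDFReal 0 1 x * f x := by
    funext x
    rw [NNReal.smul_def, Real.coe_toNNReal _ (gaussianPDFReal_nonneg 0 1 x), smul_eq_mul]
  rw [hfx]
  exact hf

lemma aux_pdf (x : ℝ) : gaussianPDFReal 0 1 x = (Real.sqrt (2*π))⁻¹ * Real.exp (-(x^2)/2) := by
  simp [gaussianPDFReal]

lemma sq_gauss_integral {b : ℝ} (hb : 0 < b) :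
    ∫ x : ℝ, x ^ 2 * Real.exp (-b * x ^ 2) = Real.sqrt (π / b) / (2 * b) := by
  have h1 : ∫ x : ℝ, x ^ 2 * Real.exp (-b * x ^ 2)
      = 2 * ∫ x in Set.Ioi (0:ℝ), x ^ 2 * Real.exp (-b * x ^ 2) := by
    rw [← integral_comp_abs (f := fun x => x ^ 2 * Real.exp (-b * x ^ 2))]
    congr 1
    ext x
    rw [sq_abs]
  have h2 : ∫ x in Set.Ioi (0:ℝ), x ^ 2 * Real.exp (-b * x ^ 2)
      = b ^ (-((2:ℝ) + 1) / 2) * (1 / 2) * Real.Gamma (((2:ℝ) + 1) / 2) := by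
    rw [← integral_rpow_mul_exp_neg_mul_rpow two_pos (by norm_num : (-1:ℝ) < 2) hb]
    refine setIntegral_congr_fun measurableSet_Ioi (fun x _ => ?_)
    rw [Real.rpow_two]
  have h3 : Real.Gamma (((2:ℝ) + 1) / 2) = Real.sqrt π / 2 := by
    rw [show ((2:ℝ) + 1) / 2 = 1/2 + 1 by norm_num, Real.Gamma_add_one (by norm_num),
      Real.Gamma_one_half_eq]
    ring
  rw [h1, h2, h3]
  have h4 : b ^ (-((2:ℝ) + 1) / 2) = (Real.sqrt b)⁻¹ * b⁻¹ := by
    rw [show (-((2:ℝ)+1)/2) = (-(1:ℝ)/2) + (-1) by norm_num, Real.rpow_add hb,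
      Real.rpow_neg_one, show (-(1:ℝ)/2) = -(1/2) by norm_num, Real.rpow_neg hb.le,
      ← Real.sqrt_eq_rpow]
  rw [h4, Real.sqrt_div (Real.pi_pos.le) b]
  have hsb : Real.sqrt b ≠ 0 := ne_of_gt (Real.sqrt_pos.mpr hb)
  field_simp

lemma exp_gauss {s : ℝ} (hs : s < 1/2) :
    (∫ x, Real.exp (s * x ^ 2) ∂(gaussianReal 0 1)
      = (Real.sqrt (2*π))⁻¹ * Real.sqrt (π / (1/2 - s)))
    ∧ Integrable (fun x => Real.exp (s * x ^ 2)) (gaussianReal 0 1) := by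
  have hb : 0 < 1/2 - s := by linarith
  have key : ∀ x : ℝ, gaussianPDFReal 0 1 x * Real.exp (s * x ^ 2)
      = (Real.sqrt (2*π))⁻¹ * Real.exp (-(1/2 - s) * x ^ 2) := by
    intro x
    rw [aux_pdf, mul_assoc, ← Real.exp_add]
    congr 1
    ring
  constructor
  · rw [gauss_integral]
    simp_rw [key]
    rw [integral_const_mul, integral_gaussian]
  · refine gauss_integrable (by measurability) ?_
    simp_rw [key]
    exact (integrable_exp_neg_mul_sq hb).const_mul _

lemma sq_exp_gauss {s : ℝ} (hs : s < 1/2) :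
    (∫ x, x ^ 2 * Real.exp (s * x ^ 2) ∂(gaussianReal 0 1)
      = (Real.sqrt (2*π))⁻¹ * (Real.sqrt (π / (1/2 - s)) / (2 * (1/2 - s))))
    ∧ Integrable (fun x => x ^ 2 * Real.exp (s * x ^ 2)) (gaussianReal 0 1) := by
  have hb : 0 < 1/2 - s := by linarith
  have key : ∀ x : ℝ, gaussianPDFReal 0 1 x * (x ^ 2 * Real.exp (s * x ^ 2))
      = (Real.sqrt (2*π))⁻¹ * (x ^ 2 * Real.exp (-(1/2 - s) * x ^ 2)) := by
    intro x
    rw [aux_pdf]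
    have : Real.exp (-(x^2)/2) * Real.exp (s * x ^ 2) = Real.exp (-(1/2 - s) * x ^ 2) := by
      rw [← Real.exp_add]; congr 1; ring
    calc (Real.sqrt (2*π))⁻¹ * Real.exp (-(x^2)/2) * (x ^ 2 * Real.exp (s * x ^ 2))
        = (Real.sqrt (2*π))⁻¹ * (x ^ 2 * (Real.exp (-(x^2)/2) * Real.exp (s * x ^ 2))) := by ring
      _ = _ := by rw [this]
  have hint : Integrable (fun x : ℝ => x ^ 2 * Real.exp (-(1/2 - s) * x ^ 2)) := by
    have := integrable_rpow_mul_exp_neg_mul_sq hb (by norm_num : (-1:ℝ) < 2)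
    convert this using 2 with x
    rw [Real.rpow_two]
  constructor
  · rw [gauss_integral]
    simp_rw [key]
    rw [integral_const_mul, sq_gauss_integral hb]
  · refine gauss_integrable (by measurability) ?_
    simp_rw [key]
    exact hint.const_mul _

/-- Chi-squared truncated-mean bound: if `X = ∑_{i<L} Z_i²` with `Z_i` i.i.d. standard
normal (`X ~ χ²_L`) and `λ > 1`, then
`E[X · 1{X ≥ λL}] ≤ λL · exp(-(L/2)(λ - log λ - 1))`. -/
theorem stmt6 (L : ℕ) (hL : 0 < L) (lam : ℝ) (hlam : 1 < lam)
    (Ω : Type) (_ : MeasurableSpace Ω) (μ : Measure Ω) (_ : IsProbabilityMeasure μ)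
    (Z : Fin L → Ω → ℝ) (hmeas : ∀ i, Measurable (Z i))
    (hindep : iIndepFun Z μ)
    (hgauss : ∀ i, Measure.map (Z i) μ = gaussianReal 0 1) :
    ∫ ω in {ω | lam * L ≤ ∑ i, (Z i ω) ^ 2}, (∑ i, (Z i ω) ^ 2) ∂μ ≤
      lam * L * Real.exp (-(L / 2 : ℝ) * (lam - Real.log lam - 1)) := by
  classical
  have hlam0 : (0:ℝ) < lam := lt_trans one_pos hlam
  set s : ℝ := (lam - 1) / (2 * lam) with hs_def
  have hs_pos : 0 < s := div_pos (by linarith) (by linarith)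
  have hs_lt : s < 1/2 := by
    rw [hs_def, div_lt_div_iff₀ (by linarith) (by norm_num)]
    linarith
  have hbval : (1/2 - s : ℝ) = 1/(2*lam) := by
    rw [hs_def]; field_simp; ring
  set a : ℝ := lam * L with ha_def
  set X : Ω → ℝ := fun ω => ∑ i, (Z i ω)^2 with hX_def
  have hXmeas : Measurable X := by
    apply Finset.measurable_sum
    intro i _
    exact (hmeas i).pow_const 2
  have hXnonneg : ∀ ω, 0 ≤ X ω := fun ω => Finset.sum_nonneg fun i _ => sq_nonneg _
  -- abbreviations for the two gaussian integrals
  set A : ℝ := (Real.sqrt (2*π))⁻¹ * Real.sqrt (π / (1/2 - s)) with hA_def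
  set B : ℝ := (Real.sqrt (2*π))⁻¹ * (Real.sqrt (π / (1/2 - s)) / (2 * (1/2 - s))) with hB_def
  -- transfer along the maps
  have comp_int : ∀ (i : Fin L) (f : ℝ → ℝ), Measurable f →
      ∫ ω, f (Z i ω) ∂μ = ∫ x, f x ∂(gaussianReal 0 1) := by
    intro i f hf
    rw [← hgauss i, integral_map (hmeas i).aemeasurable hf.aestronglyMeasurable]
  have comp_integrable : ∀ (i : Fin L) (f : ℝ → ℝ), Measurable f →
      Integrable f (gaussianReal 0 1) → Integrable (fun ω => f (Z i ω)) μ := by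
    intro i f hf hint
    rw [← hgauss i] at hint
    exact (integrable_map_measure hf.aestronglyMeasurable (hmeas i).aemeasurable).mp hint
  -- the key per-coordinate computation
  have main_i : ∀ i : Fin L,
      Integrable (fun ω => (∏ j ∈ univ.erase i, Real.exp (s * (Z j ω)^2)) *
          ((Z i ω)^2 * Real.exp (s * (Z i ω)^2))) μ ∧
      ∫ ω, (∏ j ∈ univ.erase i, Real.exp (s * (Z j ω)^2)) *
          ((Z i ω)^2 * Real.exp (s * (Z i ω)^2)) ∂μ = A ^ (L - 1) * B := by
    intro i
    set φ : Fin L → ℝ → ℝ :=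
      fun j x => if j = i then x^2 * Real.exp (s*x^2) else Real.exp (s*x^2) with hφ_def
    have hm1 : Measurable (fun x : ℝ => Real.exp (s * x^2)) :=
      ((measurable_id.pow_const 2).const_mul s).exp
    have hm2 : Measurable (fun x : ℝ => x^2 * Real.exp (s * x^2)) :=
      (measurable_id.pow_const 2).mul hm1
    have hφm : ∀ j, Measurable (φ j) := by
      intro j
      by_cases h : j = i
      · have hh : φ j = fun x => x^2 * Real.exp (s*x^2) := by funext x; simp [hφ_def, h]
        rw [hh]; exact hm2
      · have hh : φ j = fun x => Real.exp (s*x^2) := by funext x; simp [hφ_def, h]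
        rw [hh]; exact hm1
    have hF : iIndepFun (fun j => φ j ∘ Z j) μ :=
      hindep.comp φ hφm
    have hFmeas : ∀ j, Measurable (φ j ∘ Z j) := fun j => (hφm j).comp (hmeas j)
    have hIndep2 : IndepFun (∏ j ∈ univ.erase i, (φ j ∘ Z j)) (φ i ∘ Z i) μ :=
      hF.indepFun_finsetProd_of_notMem hFmeas (Finset.notMem_erase i univ)
    have hprod : ∀ ω, (∏ j ∈ univ.erase i, (φ j ∘ Z j)) ω
        = ∏ j ∈ univ.erase i, Real.exp (s * (Z j ω)^2) := by
      intro ω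
      rw [Finset.prod_apply]
      refine Finset.prod_congr rfl (fun j hj => ?_)
      have hji : j ≠ i := Finset.ne_of_mem_erase hj
      simp [hφ_def, hji]
    have hQ : (φ i ∘ Z i) = fun ω => (Z i ω)^2 * Real.exp (s * (Z i ω)^2) := by
      funext ω
      simp [hφ_def]
    have hQint : Integrable (φ i ∘ Z i) μ := by
      rw [hQ]
      exact comp_integrable i _ hm2 (sq_exp_gauss hs_lt).2
    have hYindep : iIndepFun (fun j (ω:Ω) => (Z j ω)^2) μ :=
      hindep.comp (fun j x => x^2) (fun j => measurable_id.pow_const 2)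
    have hYmeas : ∀ j : Fin L, Measurable (fun ω => (Z j ω)^2) :=
      fun j => (hmeas j).pow_const 2
    have hEint : Integrable (fun ω => ∏ j ∈ univ.erase i, Real.exp (s * (Z j ω)^2)) μ := by
      have h := hYindep.integrable_exp_mul_sum (t := s) hYmeas (s := univ.erase i)
        (fun j _ => comp_integrable j _ hm1 (exp_gauss hs_lt).2)
      have heq : (fun ω => Real.exp (s * (∑ j ∈ univ.erase i, fun ω => (Z j ω)^2) ω))
          = fun ω => ∏ j ∈ univ.erase i, Real.exp (s * (Z j ω)^2) := by
        funext ω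
        rw [Finset.sum_apply, Finset.mul_sum, Real.exp_sum]
      rwa [heq] at h
    have hcard : (univ.erase i).card = L - 1 := by
      rw [Finset.card_erase_of_mem (Finset.mem_univ i), Finset.card_univ, Fintype.card_fin]
    have hEval : ∫ ω, ∏ j ∈ univ.erase i, Real.exp (s * (Z j ω)^2) ∂μ = A ^ (L-1) := by
      have hm := hYindep.mgf_sum hYmeas (univ.erase i) (t := s)
      have h1 : mgf (∑ j ∈ univ.erase i, fun ω => (Z j ω)^2) μ s
          = ∫ ω, ∏ j ∈ univ.erase i, Real.exp (s * (Z j ω)^2) ∂μ := by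
        rw [mgf]
        congr 1
        funext ω
        simp only [Finset.sum_apply, Finset.mul_sum, Real.exp_sum]
      have h2 : ∀ j : Fin L, mgf (fun ω => (Z j ω)^2) μ s = A := by
        intro j
        rw [mgf, comp_int j (fun x => Real.exp (s * x^2)) hm1,
          (exp_gauss hs_lt).1, hA_def]
      rw [← h1, hm, Finset.prod_congr rfl (fun j _ => h2 j), Finset.prod_const, hcard]
    have hQval : ∫ ω, (φ i ∘ Z i) ω ∂μ = B := by
      rw [hQ, comp_int i _ hm2, (sq_exp_gauss hs_lt).1, hB_def]
    have hEint' : Integrable (∏ j ∈ univ.erase i, (φ j ∘ Z j)) μ := by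
      have : (∏ j ∈ univ.erase i, (φ j ∘ Z j))
          = fun ω => ∏ j ∈ univ.erase i, Real.exp (s * (Z j ω)^2) := funext hprod
      rw [this]
      exact hEint
    have hfun : (fun ω => (∏ j ∈ univ.erase i, Real.exp (s * (Z j ω)^2)) *
        ((Z i ω)^2 * Real.exp (s * (Z i ω)^2)))
        = (∏ j ∈ univ.erase i, (φ j ∘ Z j)) * (φ i ∘ Z i) := by
      funext ω
      rw [Pi.mul_apply, hprod ω, hQ]
    have hnonneg1 : 0 ≤ (∏ j ∈ univ.erase i, (φ j ∘ Z j)) := by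
      intro ω
      rw [hprod ω]
      exact Finset.prod_nonneg fun j _ => (Real.exp_pos _).le
    have hnonneg2 : 0 ≤ (φ i ∘ Z i) := by
      intro ω
      rw [hQ]
      positivity
    have hmul := hIndep2.integral_mul_eq_mul_integral
      hEint'.aestronglyMeasurable hQint.aestronglyMeasurable
    constructor
    · rw [hfun]
      exact hIndep2.integrable_mul hEint' hQint
    · rw [hfun]
      show integral μ ((∏ j ∈ univ.erase i, (φ j ∘ Z j)) * (φ i ∘ Z i)) = A ^ (L - 1) * B
      rw [hmul]
      have hE2 : integral μ (∏ j ∈ univ.erase i, (φ j ∘ Z j)) = A ^ (L-1) := by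
        rw [show (∏ j ∈ univ.erase i, (φ j ∘ Z j))
          = fun ω => ∏ j ∈ univ.erase i, Real.exp (s * (Z j ω)^2) from funext hprod]
        exact hEval
      have hQ2 : integral μ (φ i ∘ Z i) = B := hQval
      rw [hE2, hQ2]
  -- the dominating function
  set g : Ω → ℝ := fun ω => Real.exp (-(s*a)) * ∑ i, (∏ j ∈ univ.erase i,
      Real.exp (s * (Z j ω)^2)) * ((Z i ω)^2 * Real.exp (s * (Z i ω)^2)) with hg_def
  have hg_int : Integrable g μ :=
    (integrable_finset_sum _ (fun i _ => (main_i i).1)).const_mul _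
  have hg_val : ∫ ω, g ω ∂μ = Real.exp (-(s*a)) * (L * (A ^ (L - 1) * B)) := by
    rw [hg_def]
    simp only
    rw [integral_const_mul, integral_finset_sum _ (fun i _ => (main_i i).1)]
    congr 1
    rw [Finset.sum_congr rfl (fun i _ => (main_i i).2)]
    simp [Finset.card_univ, mul_comm]
  have hg_eq : ∀ ω, g ω = X ω * Real.exp (s * (X ω - a)) := by
    intro ω
    have h1 : ∀ i : Fin L, (∏ j ∈ univ.erase i, Real.exp (s * (Z j ω)^2)) *
        ((Z i ω)^2 * Real.exp (s * (Z i ω)^2))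
        = (Z i ω)^2 * ∏ j, Real.exp (s * (Z j ω)^2) := by
      intro i
      rw [← Finset.prod_erase_mul univ _ (Finset.mem_univ i)]
      ring
    have h2 : (∏ j, Real.exp (s * (Z j ω)^2)) = Real.exp (s * X ω) := by
      rw [← Real.exp_sum, hX_def]
      congr 1
      rw [Finset.mul_sum]
    rw [hg_def]
    simp only
    rw [Finset.sum_congr rfl (fun i _ => h1 i), ← Finset.sum_mul, h2]
    have h3 : (∑ i, Z i ω ^ 2) = X ω := rfl
    rw [h3, mul_comm (Real.exp (-(s*a))), mul_assoc, ← Real.exp_add]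
    congr 2
    ring
  -- the set
  have hS : MeasurableSet {ω | a ≤ X ω} := measurableSet_le measurable_const hXmeas
  have hpt : ∀ ω, Set.indicator {ω | a ≤ X ω} X ω ≤ g ω := by
    intro ω
    rw [hg_eq ω]
    by_cases hω : ω ∈ {ω | a ≤ X ω}
    · rw [Set.indicator_of_mem hω]
      refine le_mul_of_one_le_right (hXnonneg ω) (Real.one_le_exp ?_)
      have : a ≤ X ω := hω
      nlinarith [hs_pos]
    · rw [Set.indicator_of_notMem hω]
      positivity
  have hind_int : Integrable (Set.indicator {ω | a ≤ X ω} X) μ := by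
    refine hg_int.mono' ((hXmeas.indicator hS).aestronglyMeasurable) ?_
    refine Filter.Eventually.of_forall (fun ω => ?_)
    rw [Real.norm_eq_abs, abs_of_nonneg]
    · exact hpt ω
    · exact Set.indicator_nonneg (fun x _ => hXnonneg x) ω
  have step1 : ∫ ω in {ω | a ≤ X ω}, X ω ∂μ ≤ ∫ ω, g ω ∂μ := by
    rw [← integral_indicator hS]
    exact integral_mono hind_int hg_int hpt
  -- final algebra
  have algebra : Real.exp (-(s*a)) * (L * (A ^ (L - 1) * B))
      = lam * L * Real.exp (-(L / 2 : ℝ) * (lam - Real.log lam - 1)) := by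
    have hsqrt2pi : (0:ℝ) < Real.sqrt (2*π) := Real.sqrt_pos.mpr (by positivity)
    have hpi_div : π / (1/2 - s) = (2*π) * lam := by
      rw [hbval]
      field_simp
    have hA : A = Real.sqrt lam := by
      rw [hA_def, hpi_div, Real.sqrt_mul (by positivity) lam,
        inv_mul_cancel_left₀ (ne_of_gt hsqrt2pi)]
    have hB : B = lam * Real.sqrt lam := by
      rw [hB_def, hpi_div, Real.sqrt_mul (by positivity) lam,
        show (2*(1/2 - s)) = 1/lam by rw [hbval]; field_simp]
      have h2 : Real.sqrt (2*π) ≠ 0 := ne_of_gt hsqrt2pi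
      field_simp
    have hsqrtpow : Real.sqrt lam ^ L = Real.exp ((L/2 : ℝ) * Real.log lam) := by
      rw [Real.sqrt_eq_rpow, ← Real.rpow_natCast (lam ^ ((1:ℝ)/2)) L,
        ← Real.rpow_mul hlam0.le, Real.rpow_def_of_pos hlam0]
      congr 1
      ring
    have hApow : A ^ (L - 1) * B = lam * Real.exp ((L/2 : ℝ) * Real.log lam) := by
      rw [hA, hB, show Real.sqrt lam ^ (L-1) * (lam * Real.sqrt lam)
          = lam * (Real.sqrt lam ^ (L-1) * Real.sqrt lam) from by ring,
        ← pow_succ, Nat.sub_add_cancel hL, hsqrtpow]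
    have hsa : s * a = (lam - 1) * L / 2 := by
      rw [hs_def, ha_def]
      field_simp
    rw [hApow, hsa,
      show -((L:ℝ) / 2) * (lam - Real.log lam - 1)
        = -((lam - 1) * L / 2) + (L/2 : ℝ) * Real.log lam from by ring,
      Real.exp_add]
    ring
  calc ∫ ω in {ω | lam * L ≤ ∑ i, (Z i ω) ^ 2}, (∑ i, (Z i ω) ^ 2) ∂μ
      = ∫ ω in {ω | a ≤ X ω}, X ω ∂μ := rfl
    _ ≤ ∫ ω, g ω ∂μ := step1
    _ = lam * L * Real.exp (-(L / 2 : ℝ) * (lam - Real.log lam - 1)) := by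
        rw [hg_val, algebra]
end

section
/- Suppose y_i = θ_i + z_i for i = 1,...,L, where θ_i are constants and z_i are random variables. Let S² = ∑_{i=1}^L y_i², λ > 0, and θ̂_i = (1 - λL/S²)_+ y_i. Then E‖θ̂ - θ‖₂² ≤ min(‖θ‖₂², 4λL) + 4 E[‖z‖₂² · 1{‖z‖₂² > λL}]. -/
open Real MeasureTheory Finset

lemma key_ineq (a S2 Z2 P T2 f : ℝ) (ha : 0 < a) (hZ : 0 ≤ Z2) (hT : 0 ≤ T2)
    (h1 : T2 = S2 - 2*P + Z2) (h2 : 0 ≤ S2 + 2*P + Z2)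
    (hcase : (S2 ≤ a ∧ f = T2) ∨ (a < S2 ∧ f = Z2 - 2*(a/S2)*P + a^2/S2)) :
    f ≤ min T2 (4*a) + (if a < Z2 then 4*Z2 else 0) := by
  rcases hcase with ⟨hSa, hf⟩ | ⟨haS, hf⟩
  · rw [hf]
    rcases le_total T2 (4*a) with h | h
    · rw [min_eq_left h]; split_ifs <;> linarith
    · rw [min_eq_right h]; split_ifs with hz <;> linarith
  · have hS0 : 0 < S2 := lt_trans ha haS
    have hq1 : a/S2 ≤ 1 := le_of_lt ((div_lt_one hS0).2 haS)
    have hq0 : 0 < a/S2 := div_pos ha hS0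
    have h2P : 2*P ≤ S2 + Z2 := by linarith
    have hfa : f = Z2 + (a^2 - 2*a*P)/S2 := by rw [hf]; field_simp; ring
    have hfle : f ≤ 2*a + 2*Z2 := by
      have hb : (a^2 - 2*a*P)/S2 ≤ 2*a + Z2 := by
        rw [div_le_iff₀ hS0]
        nlinarith [mul_le_mul_of_nonneg_left h2 (le_of_lt ha),
          mul_le_mul_of_nonneg_right (le_of_lt haS) hZ]
      linarith
    split_ifs with hz
    · have hmn : 0 ≤ min T2 (4*a) := le_min hT (by linarith)
      linarith
    · rw [add_zero]
      apply le_min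
      · have hfac : 0 ≤ (S2 - a) * (S2 + a - 2*P) :=
          mul_nonneg (by linarith) (by linarith)
        have hb : (a^2 - 2*a*P)/S2 ≤ S2 - 2*P := by
          rw [div_le_iff₀ hS0]; nlinarith
        rw [hfa, h1]; linarith
      · linarith

lemma pointwise_ineq (L : ℕ) (hL : 0 < L) (lam : ℝ) (hlam : 0 < lam)
    (θ w : Fin L → ℝ) :
    ∑ i, ((max (1 - lam * L / ∑ j, (θ j + w j) ^ 2) 0) * (θ i + w i) - θ i) ^ 2 ≤
      min (∑ i, (θ i) ^ 2) (4 * lam * L) +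
        (if lam * L < ∑ i, (w i) ^ 2 then 4 * ∑ i, (w i) ^ 2 else 0) := by
  have ha : 0 < lam * (L : ℝ) := mul_pos hlam (by exact_mod_cast hL)
  set a : ℝ := lam * L with hadef
  set S2 : ℝ := ∑ j, (θ j + w j) ^ 2 with hS2
  set Z2 : ℝ := ∑ i, (w i) ^ 2 with hZ2
  set T2 : ℝ := ∑ i, (θ i) ^ 2 with hT2
  set P : ℝ := ∑ i, (θ i + w i) * w i with hP
  have hSnn : 0 ≤ S2 := Finset.sum_nonneg fun i _ => sq_nonneg _
  have hZnn : 0 ≤ Z2 := Finset.sum_nonneg fun i _ => sq_nonneg _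
  have hTnn : 0 ≤ T2 := Finset.sum_nonneg fun i _ => sq_nonneg _
  have h1 : T2 = S2 - 2*P + Z2 := by
    simp only [hT2, hS2, hZ2, hP, Finset.mul_sum, ← Finset.sum_sub_distrib,
      ← Finset.sum_add_distrib]
    exact Finset.sum_congr rfl fun i _ => by ring
  have h2 : 0 ≤ S2 + 2*P + Z2 := by
    have : S2 + 2*P + Z2 = ∑ i, ((θ i + w i) + w i) ^ 2 := by
      simp only [hS2, hZ2, hP, Finset.mul_sum, ← Finset.sum_add_distrib]
      exact Finset.sum_congr rfl fun i _ => by ring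
    rw [this]; exact Finset.sum_nonneg fun i _ => sq_nonneg _
  have hmin : min T2 (4 * lam * (L:ℝ)) = min T2 (4 * a) := by
    rw [hadef]; ring_nf
  rw [hmin]
  rcases le_or_gt S2 a with hle | hgt
  · have hsum : ∑ i, ((max (1 - a / S2) 0) * (θ i + w i) - θ i) ^ 2 = T2 := by
      rcases eq_or_lt_of_le hSnn with h0 | h0
      · have hy : ∀ i ∈ Finset.univ, θ i + w i = 0 := by
          intro i _
          have := (Finset.sum_eq_zero_iff_of_nonneg
            (fun j (_ : j ∈ Finset.univ) => sq_nonneg (θ j + w j))).1 h0.symm i (Finset.mem_univ i)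
          exact pow_eq_zero_iff (n := 2) (by norm_num) |>.1 this
        rw [hT2]
        refine Finset.sum_congr rfl fun i _ => ?_
        rw [hy i (Finset.mem_univ i)]; ring
      · have hmax : max (1 - a / S2) 0 = 0 := by
          apply max_eq_right
          have : (1:ℝ) ≤ a / S2 := (one_le_div h0).2 hle
          linarith
        rw [hmax, hT2]
        exact Finset.sum_congr rfl fun i _ => by ring
    rw [hsum]
    exact key_ineq a S2 Z2 P T2 T2 ha hZnn hTnn h1 h2 (Or.inl ⟨hle, rfl⟩)
  · have hS0 : 0 < S2 := lt_trans ha hgt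
    have hmax : max (1 - a / S2) 0 = 1 - a / S2 := by
      apply max_eq_left
      have : a / S2 < 1 := (div_lt_one hS0).2 hgt
      linarith
    have hsum : ∑ i, ((max (1 - a / S2) 0) * (θ i + w i) - θ i) ^ 2
        = Z2 - 2*(a/S2)*P + a^2/S2 := by
      rw [hmax]
      have step : ∑ i, ((1 - a / S2) * (θ i + w i) - θ i) ^ 2
          = Z2 - 2*(a/S2)*P + (a/S2)^2 * S2 := by
        simp only [hZ2, hP, hS2, Finset.mul_sum, ← Finset.sum_sub_distrib,
          ← Finset.sum_add_distrib]
        exact Finset.sum_congr rfl fun i _ => by ring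
      rw [step]
      congr 1
      field_simp
    rw [hsum]
    exact key_ineq a S2 Z2 P T2 _ ha hZnn hTnn h1 h2 (Or.inr ⟨hgt, rfl⟩)

/-- Oracle inequality for the block James–Stein estimator: with `y = θ + z`,
`S² = ∑ yᵢ²` and `θ̂ᵢ = (1 - λL/S²)₊ yᵢ`, one has
`E‖θ̂ - θ‖₂² ≤ min(‖θ‖₂², 4λL) + 4 E[‖z‖₂² 1{‖z‖₂² > λL}]`. -/
theorem stmt7 (L : ℕ) (hL : 0 < L) (lam : ℝ) (hlam : 0 < lam)
    (Ω : Type) (_ : MeasurableSpace Ω) (μ : Measure Ω) (_ : IsProbabilityMeasure μ)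
    (θ : Fin L → ℝ) (z : Fin L → Ω → ℝ) (hmeas : ∀ i, Measurable (z i))
    (hint : Integrable (fun ω => ∑ i, (z i ω) ^ 2) μ) :
    (∫ ω, ∑ i,
        ((max (1 - lam * L / ∑ j, (θ j + z j ω) ^ 2) 0) * (θ i + z i ω) - θ i) ^ 2 ∂μ) ≤
      min (∑ i, (θ i) ^ 2) (4 * lam * L) +
        4 * ∫ ω in {ω | lam * L < ∑ i, (z i ω) ^ 2}, (∑ i, (z i ω) ^ 2) ∂μ := by
  set Z2 : Ω → ℝ := fun ω => ∑ i, (z i ω) ^ 2 with hZ2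
  have hmeasZ : Measurable Z2 :=
    Finset.measurable_sum _ fun i _ => (hmeas i).pow_const 2
  set s : Set Ω := {ω | lam * L < Z2 ω} with hs
  have hsm : MeasurableSet s := measurableSet_lt measurable_const hmeasZ
  set C : ℝ := min (∑ i, (θ i) ^ 2) (4 * lam * L) with hC
  have hind : Integrable (s.indicator (fun ω => 4 * Z2 ω)) μ :=
    (hint.const_mul 4).indicator hsm
  have hbi : Integrable (fun ω => C + s.indicator (fun ω => 4 * Z2 ω) ω) μ :=
    (integrable_const C).add hind
  have hle : (∫ ω, ∑ i,
      ((max (1 - lam * L / ∑ j, (θ j + z j ω) ^ 2) 0) * (θ i + z i ω) - θ i) ^ 2 ∂μ)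
      ≤ ∫ ω, (C + s.indicator (fun ω => 4 * Z2 ω) ω) ∂μ := by
    apply integral_mono_of_nonneg
    · exact Filter.Eventually.of_forall fun ω =>
        Finset.sum_nonneg fun i _ => sq_nonneg _
    · exact hbi
    · refine Filter.Eventually.of_forall fun ω => ?_
      have := pointwise_ineq L hL lam hlam θ (fun i => z i ω)
      simp only [Set.indicator_apply, hs, Set.mem_setOf_eq]
      exact this
  refine hle.trans (le_of_eq ?_)
  rw [integral_add (integrable_const C) hind, integral_const]
  have h1 : μ.real Set.univ • C = C := by simp
  rw [h1, integral_indicator hsm, integral_const_mul]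
end

section
/- Let h be a density with ∫|x|^{ε₃} h(x) dx < ∞ for some ε₃ > 0 (so P(|ξ| ≥ |x|) ≤ C|x|^{-ε₃}). Then for every fixed l ≥ 1 there exists D_l such that the median η of m = 2v+1 i.i.d. observations with density h satisfies E|√m η|^{2l} ≤ D_l m^l, i.e., E|η|^{2l} ≤ D_l, uniformly in all large v. -/
open Real MeasureTheory ProbabilityTheory Finset
open scoped ENNReal

/-- The sample median of `n` values: the `(k+1)`-st smallest value (index `k` from 0). -/
noncomputable def sampleMedian {n : ℕ} (k : ℕ) (v : Fin n → ℝ) : ℝ :=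
  ((Multiset.map v Finset.univ.val).sort (· ≤ ·)).getD k 0

lemma median_count (v : ℕ) (t : ℝ) (f : Fin (2 * v + 1) → ℝ)
    (ht : t ≤ |sampleMedian v f|) :
    v + 1 ≤ (Finset.univ.filter (fun i => t ≤ |f i|)).card := by
  classical
  set M : Multiset ℝ := Multiset.map f Finset.univ.val with hM
  set L : List ℝ := M.sort (· ≤ ·) with hL
  have hlen : L.length = 2 * v + 1 := by
    rw [hL, Multiset.length_sort, hM, Multiset.card_map]; simp
  have hsorted : L.Pairwise (· ≤ ·) := Multiset.pairwise_sort _ _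
  have hv : v < L.length := by omega
  have hmed : sampleMedian v f = L[v] := by
    rw [sampleMedian, ← hM, ← hL, List.getD_eq_getElem L 0 hv]
  have hcount : (Finset.univ.filter (fun i => t ≤ |f i|)).card
      = L.countP (fun x => decide (t ≤ |x|)) := by
    have h1 : L.countP (fun x => decide (t ≤ |x|)) = M.countP (fun x => t ≤ |x|) := by
      rw [hL, ← Multiset.coe_countP]
      congr 1
      exact Multiset.sort_eq _ _
    rw [h1, hM, Multiset.countP_map]
    rfl
  rw [hcount]
  rw [hmed] at ht
  rcases abs_cases L[v] with ⟨he, _⟩ | ⟨he, _⟩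
  · rw [he] at ht
    have hall : ∀ x ∈ L.drop v, (fun x => decide (t ≤ |x|)) x = true := by
      intro x hx
      obtain ⟨i, hi, hxe⟩ := List.mem_iff_getElem.mp hx
      rw [List.getElem_drop] at hxe
      have hle : L[v] ≤ L[v + i]'(by rw [List.length_drop] at hi; omega) := by
        apply List.Pairwise.rel_get_of_le hsorted
        simp [Fin.le_def]
      simp only [decide_eq_true_eq]
      rw [← hxe]
      exact le_trans (le_trans ht hle) (le_abs_self _)
    have h2 : (L.drop v).countP (fun x => decide (t ≤ |x|)) = (L.drop v).length :=
      List.countP_eq_length.mpr hall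
    have h3 : L.countP (fun x => decide (t ≤ |x|))
        = (L.take v).countP (fun x => decide (t ≤ |x|))
          + (L.drop v).countP (fun x => decide (t ≤ |x|)) := by
      conv_lhs => rw [← List.take_append_drop v L]
      rw [List.countP_append]
    rw [h3, h2, List.length_drop, hlen]
    omega
  · rw [he] at ht
    have hall : ∀ x ∈ L.take (v+1), (fun x => decide (t ≤ |x|)) x = true := by
      intro x hx
      obtain ⟨i, hi, hxe⟩ := List.mem_iff_getElem.mp hx
      rw [List.getElem_take] at hxe
      have hil : i < L.length := by
        rw [List.length_take] at hi; omega
      have hle : L[i] ≤ L[v] := by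
        apply List.Pairwise.rel_get_of_le hsorted
        rw [List.length_take] at hi
        simp [Fin.le_def]; omega
      simp only [decide_eq_true_eq]
      rw [← hxe]
      have : t ≤ -L[i] := by linarith
      exact le_trans this (neg_le_abs _)
    have h2 : (L.take (v+1)).countP (fun x => decide (t ≤ |x|)) = (L.take (v+1)).length :=
      List.countP_eq_length.mpr hall
    have h3 : L.countP (fun x => decide (t ≤ |x|))
        = (L.take (v+1)).countP (fun x => decide (t ≤ |x|))
          + (L.drop (v+1)).countP (fun x => decide (t ≤ |x|)) := by
      conv_lhs => rw [← List.take_append_drop (v+1) L]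
      rw [List.countP_append]
    rw [h3, h2, List.length_take, hlen]
    omega

lemma tail_bound (h : ℝ → ℝ) (hmeas : Measurable h) (hnn : ∀ x, 0 ≤ h x)
    (ε₃ : ℝ) (hε₃ : 0 < ε₃)
    (htail : Integrable (fun x => |x| ^ ε₃ * h x) volume) (t : ℝ) (ht : 1 ≤ t) :
    (volume.withDensity fun x => ENNReal.ofReal (h x)) {x | t ≤ |x|}
      ≤ ENNReal.ofReal ((max 1 (∫ x, |x| ^ ε₃ * h x)) * t ^ (-ε₃)) := by
  have ht0 : (0:ℝ) < t := lt_of_lt_of_le one_pos ht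
  set c : ℝ := max 1 (∫ x, |x| ^ ε₃ * h x) with hc
  have hA : MeasurableSet {x : ℝ | t ≤ |x|} :=
    measurableSet_le measurable_const measurable_abs
  have hgm : Measurable fun x : ℝ => ENNReal.ofReal (|x| ^ ε₃ * h x) :=
    ENNReal.measurable_ofReal.comp
      (((Real.continuous_rpow_const hε₃.le).measurable.comp measurable_abs).mul hmeas)
  have key : ENNReal.ofReal (t ^ ε₃) *
      (volume.withDensity fun x => ENNReal.ofReal (h x)) {x | t ≤ |x|}
      ≤ ENNReal.ofReal c := by
    rw [withDensity_apply _ hA]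
    rw [← lintegral_const_mul (ENNReal.ofReal (t ^ ε₃))
      (f := fun x => ENNReal.ofReal (h x)) hmeas.ennreal_ofReal]
    have step1 : ∫⁻ x in {x : ℝ | t ≤ |x|}, ENNReal.ofReal (t ^ ε₃) * ENNReal.ofReal (h x)
        ≤ ∫⁻ x in {x : ℝ | t ≤ |x|}, ENNReal.ofReal (|x| ^ ε₃ * h x) := by
      apply setLIntegral_mono hgm
      intro x hx
      rw [← ENNReal.ofReal_mul (by positivity)]
      apply ENNReal.ofReal_le_ofReal
      apply mul_le_mul_of_nonneg_right _ (hnn x)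
      exact Real.rpow_le_rpow (le_of_lt ht0) hx (le_of_lt hε₃)
    refine le_trans step1 (le_trans (setLIntegral_le_lintegral _ _) ?_)
    rw [← ofReal_integral_eq_lintegral_ofReal htail
      (Filter.Eventually.of_forall fun x => mul_nonneg (by positivity) (hnn x))]
    exact ENNReal.ofReal_le_ofReal (le_max_right _ _)
  have h1 : ENNReal.ofReal (t ^ (-ε₃)) * ENNReal.ofReal (t ^ ε₃) = 1 := by
    rw [← ENNReal.ofReal_mul (by positivity), ← Real.rpow_add ht0]
    simp
  calc (volume.withDensity fun x => ENNReal.ofReal (h x)) {x | t ≤ |x|}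
      = ENNReal.ofReal (t ^ (-ε₃)) * (ENNReal.ofReal (t ^ ε₃) *
        (volume.withDensity fun x => ENNReal.ofReal (h x)) {x | t ≤ |x|}) := by
        rw [← mul_assoc, h1, one_mul]
    _ ≤ ENNReal.ofReal (t ^ (-ε₃)) * ENNReal.ofReal c := mul_le_mul_right key _
    _ = ENNReal.ofReal (c * t ^ (-ε₃)) := by
        rw [← ENNReal.ofReal_mul (by positivity), mul_comm]

lemma numeric_bound (c ε₃ : ℝ) (hc1 : 1 ≤ c) (hε₃ : 0 < ε₃) (l v₀ N v n : ℕ)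
    (hv₀ε : 2*(l:ℝ)+2 ≤ ε₃*(v₀+1)) (hNε : 8*c ≤ (N:ℝ)^ε₃) (hN1 : 1 ≤ N)
    (hvv : v₀ ≤ v) (hn : N ≤ n) :
    ((2*v+1).choose (v+1) : ℝ) * (c * (n:ℝ)^(-ε₃))^(v+1)
      ≤ (4*c)^(v₀+1) * (n:ℝ)^(-(2*(l:ℝ)+2)) := by
  have hc0 : (0:ℝ) < c := lt_of_lt_of_le one_pos hc1
  have hn1 : (1:ℝ) ≤ (n:ℝ) := by exact_mod_cast le_trans hN1 hn
  have hn0 : (0:ℝ) < (n:ℝ) := lt_of_lt_of_le one_pos hn1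
  have hN0 : (0:ℝ) < (N:ℝ) := by exact_mod_cast hN1
  set b : ℝ := c * (n:ℝ)^(-ε₃) with hb
  have hb0 : 0 ≤ b := mul_nonneg hc0.le (rpow_nonneg hn0.le _)
  have hch : ((2*v+1).choose (v+1) : ℝ) ≤ 4^(v+1) := by
    have h1 : (2*v+1).choose (v+1) ≤ 2 ^ (2*v+1) := by
      calc (2*v+1).choose (v+1) ≤ ∑ i ∈ Finset.range (2*v+1+1), (2*v+1).choose i :=
          Finset.single_le_sum (fun i _ => Nat.zero_le _) (Finset.mem_range.mpr (by omega))
        _ = 2 ^ (2*v+1) := Nat.sum_range_choose _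
    have h2 : (2:ℕ) ^ (2*v+1) ≤ 4 ^ (v+1) := by
      have : (4:ℕ) ^ (v+1) = 2 ^ (2*v+2) := by
        rw [show (4:ℕ) = 2^2 by norm_num, ← pow_mul]; ring_nf
      rw [this]
      exact Nat.pow_le_pow_right (by norm_num) (by omega)
    calc ((2*v+1).choose (v+1) : ℝ) ≤ ((2:ℕ) ^ (2*v+1) : ℕ) := by exact_mod_cast h1
      _ ≤ ((4:ℕ) ^ (v+1) : ℕ) := by exact_mod_cast h2
      _ = (4:ℝ)^(v+1) := by push_cast; ring
  have hmono : (n:ℝ)^(-ε₃) ≤ (N:ℝ)^(-ε₃) := by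
    rw [rpow_neg hn0.le, rpow_neg hN0.le]
    have h1 : (N:ℝ)^ε₃ ≤ (n:ℝ)^ε₃ :=
      rpow_le_rpow hN0.le (by exact_mod_cast hn) hε₃.le
    exact inv_anti₀ (rpow_pos_of_pos hN0 _) h1
  have h4b : 4 * b ≤ 1/2 := by
    have h1 : 4 * b ≤ 4 * c * (N:ℝ)^(-ε₃) := by
      rw [hb, ← mul_assoc]
      exact mul_le_mul_of_nonneg_left hmono (by positivity)
    have h2 : 4 * c * (N:ℝ)^(-ε₃) ≤ 1/2 := by
      rw [rpow_neg hN0.le]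
      rw [mul_inv_le_iff₀ (rpow_pos_of_pos hN0 _)]
      linarith
    linarith
  have hstep : ((2*v+1).choose (v+1) : ℝ) * b^(v+1) ≤ (4*b)^(v₀+1) := by
    calc ((2*v+1).choose (v+1) : ℝ) * b^(v+1) ≤ 4^(v+1) * b^(v+1) :=
        mul_le_mul_of_nonneg_right hch (pow_nonneg hb0 _)
      _ = (4*b)^(v+1) := (mul_pow _ _ _).symm
      _ ≤ (4*b)^(v₀+1) :=
        pow_le_pow_of_le_one (by positivity) (by linarith) (by omega)
  refine le_trans hstep ?_
  have hsplit : (4*b)^(v₀+1) = (4*c)^(v₀+1) * ((n:ℝ)^(-ε₃))^(v₀+1) := by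
    rw [hb, ← mul_assoc, mul_pow]
  rw [hsplit]
  apply mul_le_mul_of_nonneg_left _ (by positivity)
  rw [← rpow_natCast ((n:ℝ)^(-ε₃)) (v₀+1), ← rpow_mul hn0.le]
  apply rpow_le_rpow_of_exponent_le hn1
  push_cast
  nlinarith

lemma numeric_bound2 (c : ℝ) (hc1 : 1 ≤ c) (l v₀ n : ℕ) (hn1 : 1 ≤ n) :
    ((n:ℝ)+1)^(2*l) * ((4*c)^(v₀+1) * (n:ℝ)^(-(2*(l:ℝ)+2)))
      ≤ 4^l * (4*c)^(v₀+1) * (n:ℝ)^(-(2:ℝ)) := by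
  have hc0 : (0:ℝ) < c := lt_of_lt_of_le one_pos hc1
  have hn1' : (1:ℝ) ≤ (n:ℝ) := by exact_mod_cast hn1
  have hn0 : (0:ℝ) < (n:ℝ) := lt_of_lt_of_le one_pos hn1'
  have h1 : ((n:ℝ)+1)^(2*l) ≤ 4^l * (n:ℝ)^(2*l) := by
    calc ((n:ℝ)+1)^(2*l) ≤ (2*(n:ℝ))^(2*l) :=
        pow_le_pow_left₀ (by positivity) (by linarith) _
      _ = 4^l * (n:ℝ)^(2*l) := by
        rw [mul_pow, show (4:ℝ) = 2^2 by norm_num, ← pow_mul]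
  have h2 : (n:ℝ)^(2*l) * (n:ℝ)^(-(2*(l:ℝ)+2)) = (n:ℝ)^(-(2:ℝ)) := by
    rw [← rpow_natCast (n:ℝ) (2*l), ← rpow_add hn0]
    congr 1
    push_cast
    ring
  calc ((n:ℝ)+1)^(2*l) * ((4*c)^(v₀+1) * (n:ℝ)^(-(2*(l:ℝ)+2)))
      ≤ (4^l * (n:ℝ)^(2*l)) * ((4*c)^(v₀+1) * (n:ℝ)^(-(2*(l:ℝ)+2))) := by
        apply mul_le_mul_of_nonneg_right h1 (by positivity)
    _ = 4^l * (4*c)^(v₀+1) * ((n:ℝ)^(2*l) * (n:ℝ)^(-(2*(l:ℝ)+2))) := by ring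
    _ = 4^l * (4*c)^(v₀+1) * (n:ℝ)^(-(2:ℝ)) := by rw [h2]

/-- Finite moments of the sample median under a weak tail condition: if the density `h`
satisfies `∫ |x|^{ε₃} h(x) dx < ∞` for some `ε₃ > 0`, then for every `l ≥ 1` there is a
constant `D_l` bounding `E|η|^{2l}` for the median `η` of `m = 2v+1` i.i.d. observations,
uniformly over all large `v`. -/
theorem stmt15 (h : ℝ → ℝ) (hmeas : Measurable h) (hnn : ∀ x, 0 ≤ h x)
    (ε₃ : ℝ) (hε₃ : 0 < ε₃)
    (htail : Integrable (fun x => |x| ^ ε₃ * h x) volume) :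
    ∀ l : ℕ, 1 ≤ l → ∃ D : ℝ, ∃ v₀ : ℕ, ∀ v : ℕ, v₀ ≤ v →
      ∀ (Ω : Type) (_ : MeasurableSpace Ω) (μ : Measure Ω)
        (_ : IsProbabilityMeasure μ) (X : Fin (2 * v + 1) → Ω → ℝ),
        (∀ i, Measurable (X i)) →
        iIndepFun X μ →
        (∀ i, Measure.map (X i) μ =
          volume.withDensity fun x => ENNReal.ofReal (h x)) →
        ∫ ω, |sampleMedian v (fun i => X i ω)| ^ (2 * l) ∂μ ≤ D := by
  classical
  intro l _hl
  set c : ℝ := max 1 (∫ x, |x| ^ ε₃ * h x) with hc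
  have hc1 : (1:ℝ) ≤ c := le_max_left _ _
  have hc0 : (0:ℝ) < c := lt_of_lt_of_le one_pos hc1
  set v₀ : ℕ := ⌈(2*(l:ℝ)+2)/ε₃⌉₊ with hv₀def
  have hv₀ε : 2*(l:ℝ)+2 ≤ ε₃*(v₀+1) := by
    have h1 : (2*(l:ℝ)+2)/ε₃ ≤ v₀ := Nat.le_ceil _
    have h2 : 2*(l:ℝ)+2 ≤ ε₃ * v₀ := by
      rw [div_le_iff₀ hε₃] at h1
      linarith
    nlinarith
  set N : ℕ := ⌈(8*c)^(1/ε₃)⌉₊ + 1 with hNdef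
  have hN1 : 1 ≤ N := Nat.le_add_left 1 _
  have hNε : 8*c ≤ (N:ℝ)^ε₃ := by
    have h1 : (8*c)^(1/ε₃) ≤ (N:ℝ) := by
      rw [hNdef]
      push_cast
      calc (8*c)^(1/ε₃) ≤ ⌈(8*c)^(1/ε₃)⌉₊ := Nat.le_ceil _
        _ ≤ (⌈(8*c)^(1/ε₃)⌉₊ : ℝ) + 1 := by linarith
    have h2 : ((8*c)^(1/ε₃))^ε₃ ≤ (N:ℝ)^ε₃ :=
      rpow_le_rpow (by positivity) h1 hε₃.le
    rwa [← rpow_mul (by positivity), one_div, inv_mul_cancel₀ (ne_of_gt hε₃),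
      rpow_one] at h2
  set K : ℝ := (4:ℝ)^l * (4*c)^(v₀+1) with hK
  have hK0 : 0 ≤ K := by positivity
  set r : ℕ → ℝ := fun n => if n < N then ((n:ℝ)+1)^(2*l) else K * (n:ℝ) ^ (-(2:ℝ))
    with hr
  have hrlt : ∀ n, n < N → r n = ((n:ℝ)+1)^(2*l) := by
    intro n hn; rw [hr]; simp [hn]
  have hrge : ∀ n, N ≤ n → r n = K * (n:ℝ) ^ (-(2:ℝ)) := by
    intro n hn; rw [hr]; simp [Nat.not_lt.mpr hn]
  have hr0 : ∀ n, 0 ≤ r n := by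
    intro n
    by_cases hn : n < N
    · rw [hrlt n hn]; positivity
    · rw [hrge n (Nat.not_lt.mp hn)]
      have : (0:ℝ) ≤ (n:ℝ) ^ (-(2:ℝ)) := rpow_nonneg (Nat.cast_nonneg n) _
      positivity
  have hrsum : Summable r := by
    rw [← summable_nat_add_iff N]
    have hg : Summable (fun n : ℕ => K * (n:ℝ) ^ (-(2:ℝ))) :=
      (Real.summable_nat_rpow.mpr (by norm_num)).mul_left K
    have hg2 : Summable (fun n : ℕ => K * ((n + N : ℕ):ℝ) ^ (-(2:ℝ))) :=
      (summable_nat_add_iff N).mpr hg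
    apply hg2.congr
    intro n
    rw [hrge (n + N) (by omega)]
  set D : ℝ := ∑' n, r n with hD
  have hD0 : 0 ≤ D := tsum_nonneg hr0
  refine ⟨D, v₀, ?_⟩
  intro v hv Ω mΩ μ hprob X hXm hind hmap
  set A : ℕ → Set ℝ := fun n => {x : ℝ | (n:ℝ) ≤ |x|} with hA
  have hAmeas : ∀ n, MeasurableSet (A n) := fun n =>
    measurableSet_le measurable_const measurable_abs
  set E : ℕ → Set Ω := fun n =>
    ⋃ S ∈ Finset.powersetCard (v+1) (Finset.univ : Finset (Fin (2*v+1))),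
      ⋂ i ∈ S, X i ⁻¹' A n with hE
  have hEmeas : ∀ n, MeasurableSet (E n) := by
    intro n
    apply Finset.measurableSet_biUnion
    intro S _
    exact Finset.measurableSet_biInter _ (fun i _ => hXm i (hAmeas n))
  -- per-coordinate tail bound
  have hq : ∀ (i : Fin (2*v+1)) (n : ℕ), 1 ≤ n →
      μ (X i ⁻¹' A n) ≤ ENNReal.ofReal (c * (n:ℝ)^(-ε₃)) := by
    intro i n hn
    have h1 : μ (X i ⁻¹' A n) = Measure.map (X i) μ (A n) :=
      (Measure.map_apply (hXm i) (hAmeas n)).symm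
    rw [h1, hmap i]
    exact tail_bound h hmeas hnn ε₃ hε₃ htail (n:ℝ) (by exact_mod_cast hn)
  -- union bound for E n
  have hEbound : ∀ n : ℕ, 1 ≤ n → μ (E n)
      ≤ ((2*v+1).choose (v+1) : ℝ≥0∞) * (ENNReal.ofReal (c * (n:ℝ)^(-ε₃))) ^ (v+1) := by
    intro n hn
    calc μ (E n)
        ≤ ∑ S ∈ Finset.powersetCard (v+1) (Finset.univ : Finset (Fin (2*v+1))),
          μ (⋂ i ∈ S, X i ⁻¹' A n) := measure_biUnion_finset_le _ _
      _ ≤ ∑ S ∈ Finset.powersetCard (v+1) (Finset.univ : Finset (Fin (2*v+1))),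
          (ENNReal.ofReal (c * (n:ℝ)^(-ε₃))) ^ (v+1) := by
          apply Finset.sum_le_sum
          intro S hS
          have hcard : S.card = v + 1 := (Finset.mem_powersetCard.mp hS).2
          rw [hind.measure_inter_preimage_eq_mul S (fun i _ => hAmeas n)]
          calc ∏ i ∈ S, μ (X i ⁻¹' A n)
              ≤ ∏ _i ∈ S, ENNReal.ofReal (c * (n:ℝ)^(-ε₃)) :=
                Finset.prod_le_prod' (fun i _ => hq i n hn)
            _ = (ENNReal.ofReal (c * (n:ℝ)^(-ε₃))) ^ (v+1) := by
                rw [Finset.prod_const, hcard]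
      _ = ((2*v+1).choose (v+1) : ℝ≥0∞) * (ENNReal.ofReal (c * (n:ℝ)^(-ε₃))) ^ (v+1) := by
          rw [Finset.sum_const, Finset.card_powersetCard, Finset.card_univ]
          simp [nsmul_eq_mul]
  -- inclusion
  have hincl : ∀ (n : ℕ) (ω : Ω), (n:ℝ) ≤ |sampleMedian v (fun i => X i ω)| → ω ∈ E n := by
    intro n ω hω
    have hcard := median_count v n (fun i => X i ω) hω
    obtain ⟨S, hSsub, hScard⟩ := Finset.exists_subset_card_eq hcard
    show ω ∈ ⋃ S ∈ Finset.powersetCard (v+1) (Finset.univ : Finset (Fin (2*v+1))),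
      ⋂ i ∈ S, X i ⁻¹' A n
    refine Set.mem_biUnion (Finset.mem_powersetCard.mpr ⟨Finset.subset_univ S, hScard⟩) ?_
    rw [Set.mem_iInter₂]
    intro i hi
    exact (Finset.mem_filter.mp (hSsub hi)).2
  -- pointwise bound
  have hpt : ∀ ω, ENNReal.ofReal (|sampleMedian v (fun i => X i ω)| ^ (2*l))
      ≤ ∑' n : ℕ, ENNReal.ofReal (((n:ℝ)+1)^(2*l))
          * (E n).indicator (1 : Ω → ℝ≥0∞) ω := by
    intro ω
    set med : ℝ := sampleMedian v (fun i => X i ω) with hmed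
    set n : ℕ := ⌊|med|⌋₊ with hn
    have h1 : ω ∈ E n := hincl n ω (Nat.floor_le (abs_nonneg med))
    have h2 : |med| ^ (2*l) ≤ ((n:ℝ)+1)^(2*l) :=
      pow_le_pow_left₀ (abs_nonneg med) (Nat.lt_floor_add_one |med|).le _
    calc ENNReal.ofReal (|med| ^ (2*l))
        ≤ ENNReal.ofReal (((n:ℝ)+1)^(2*l)) * (E n).indicator (1 : Ω → ℝ≥0∞) ω := by
          rw [Set.indicator_of_mem h1, Pi.one_apply, mul_one]
          exact ENNReal.ofReal_le_ofReal h2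
      _ ≤ ∑' m : ℕ, ENNReal.ofReal (((m:ℝ)+1)^(2*l))
            * (E m).indicator (1 : Ω → ℝ≥0∞) ω := ENNReal.le_tsum n
  -- per-term bound
  have hterm : ∀ n : ℕ, ENNReal.ofReal (((n:ℝ)+1)^(2*l)) * μ (E n)
      ≤ ENNReal.ofReal (r n) := by
    intro n
    by_cases hnN : n < N
    · have h1 : μ (E n) ≤ 1 := prob_le_one
      calc ENNReal.ofReal (((n:ℝ)+1)^(2*l)) * μ (E n)
          ≤ ENNReal.ofReal (((n:ℝ)+1)^(2*l)) * 1 := mul_le_mul_right h1 _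
        _ = ENNReal.ofReal (r n) := by rw [mul_one, hrlt n hnN]
    · push_neg at hnN
      have hn1 : 1 ≤ n := le_trans hN1 hnN
      have h1 : μ (E n) ≤ ENNReal.ofReal ((4*c)^(v₀+1) * (n:ℝ)^(-(2*(l:ℝ)+2))) := by
        refine le_trans (hEbound n hn1) ?_
        have hb0 : 0 ≤ c * (n:ℝ)^(-ε₃) :=
          mul_nonneg hc0.le (rpow_nonneg (Nat.cast_nonneg n) _)
        rw [← ENNReal.ofReal_pow hb0, ← ENNReal.ofReal_natCast,
          ← ENNReal.ofReal_mul (Nat.cast_nonneg _)]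
        exact ENNReal.ofReal_le_ofReal
          (numeric_bound c ε₃ hc1 hε₃ l v₀ N v n hv₀ε hNε hN1 hv hnN)
      calc ENNReal.ofReal (((n:ℝ)+1)^(2*l)) * μ (E n)
          ≤ ENNReal.ofReal (((n:ℝ)+1)^(2*l))
            * ENNReal.ofReal ((4*c)^(v₀+1) * (n:ℝ)^(-(2*(l:ℝ)+2))) := mul_le_mul_right h1 _
        _ = ENNReal.ofReal (((n:ℝ)+1)^(2*l) * ((4*c)^(v₀+1) * (n:ℝ)^(-(2*(l:ℝ)+2)))) := by
            rw [← ENNReal.ofReal_mul (by positivity)]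
        _ ≤ ENNReal.ofReal (r n) := by
            apply ENNReal.ofReal_le_ofReal
            rw [hrge n hnN, hK]
            exact numeric_bound2 c hc1 l v₀ n hn1
  -- main integral bound
  by_cases hms : AEStronglyMeasurable (fun ω => |sampleMedian v (fun i => X i ω)| ^ (2*l)) μ
  · rw [integral_eq_lintegral_of_nonneg_ae (ae_of_all _ fun ω => by positivity) hms]
    apply ENNReal.toReal_le_of_le_ofReal hD0
    calc ∫⁻ ω, ENNReal.ofReal (|sampleMedian v (fun i => X i ω)| ^ (2*l)) ∂μ
        ≤ ∫⁻ ω, ∑' n : ℕ, ENNReal.ofReal (((n:ℝ)+1)^(2*l))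
            * (E n).indicator (1 : Ω → ℝ≥0∞) ω ∂μ := lintegral_mono hpt
      _ = ∑' n : ℕ, ∫⁻ ω, ENNReal.ofReal (((n:ℝ)+1)^(2*l))
            * (E n).indicator (1 : Ω → ℝ≥0∞) ω ∂μ :=
          lintegral_tsum (fun n =>
            ((measurable_one.indicator (hEmeas n)).const_mul _).aemeasurable)
      _ = ∑' n : ℕ, ENNReal.ofReal (((n:ℝ)+1)^(2*l)) * μ (E n) := by
          apply tsum_congr
          intro n
          rw [lintegral_const_mul (ENNReal.ofReal (((n:ℝ)+1)^(2*l)))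
              (f := (E n).indicator (1 : Ω → ℝ≥0∞)) (measurable_one.indicator (hEmeas n)),
            lintegral_indicator_one (hEmeas n)]
      _ ≤ ∑' n : ℕ, ENNReal.ofReal (r n) := ENNReal.tsum_le_tsum hterm
      _ = ENNReal.ofReal D := (ENNReal.ofReal_tsum_of_nonneg hr0 hrsum).symm
  · rw [integral_non_aestronglyMeasurable hms]
    exact hD0
end
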